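/- arXiv:2601.03891 — 2 statements merged into one kernel-verified Lean document; each statement's English description precedes it below -/
import Mathlib

section
/- For n ≡ 1 (mod 3), n ≥ 4, the stability of the strong domination number of the path P_n equals 1; that is, there exists a vertex v of P_n with γ_st(P_n − v) ≠ γ_st(P_n). -/
open SimpleGraph

/-- `D` is a strong dominating set of `G`: every vertex outside `D` has a neighbor
in `D` whose degree is at least its own. -/
def IsStrongDominating {V : Type*} (G : SimpleGraph V) (D : Set V) : Prop :=
  ∀ v ∉ D, ∃ u ∈ D, G.Adj v u ∧ (G.neighborSet v).ncard ≤ (G.neighborSet u).ncard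

/-- The strong domination number. -/
noncomputable def gammaSt {V : Type*} (G : SimpleGraph V) : ℕ :=
  sInf {n | ∃ D : Set V, D.Finite ∧ IsStrongDominating G D ∧ D.ncard = n}

/-- The stability of the strong domination number: the minimum size of a vertex set
whose removal changes the strong domination number. -/
noncomputable def stGammaSt {V : Type*} (G : SimpleGraph V) : ℕ :=
  sInf {n | ∃ S : Set V, S.Finite ∧ S.ncard = n ∧ gammaSt (G.induce Sᶜ) ≠ gammaSt G}

/-- The join of two graphs. -/
def joinG {V W : Type*} (G : SimpleGraph V) (H : SimpleGraph W) : SimpleGraph (V ⊕ W) :=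
  SimpleGraph.fromRel (fun x y =>
    match x, y with
    | Sum.inl a, Sum.inl b => G.Adj a b
    | Sum.inr a, Sum.inr b => H.Adj a b
    | _, _ => True)

/-- `n` disjoint copies of `K₂`. -/
def nK2 (n : ℕ) : SimpleGraph (Fin n × Fin 2) where
  Adj x y := x.1 = y.1 ∧ x.2 ≠ y.2
  symm := ⟨fun x y h => ⟨h.1.symm, h.2.symm⟩⟩
  loopless := ⟨fun x h => h.2 rfl⟩

/-! ### Auxiliary lemmas -/

lemma ncard_neighborSet_iso {V W : Type*} {G : SimpleGraph V} {H : SimpleGraph W}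
    (e : G ≃g H) (v : V) : (H.neighborSet (e v)).ncard = (G.neighborSet v).ncard := by
  rw [← Nat.card_coe_set_eq, ← Nat.card_coe_set_eq]
  exact Nat.card_congr (e.mapNeighborSet v).symm

lemma IsStrongDominating.image_iso {V W : Type*} {G : SimpleGraph V} {H : SimpleGraph W}
    (e : G ≃g H) {D : Set V} (hD : IsStrongDominating G D) :
    IsStrongDominating H (e '' D) := by
  intro v hv
  obtain ⟨u, hu, hadj, hle⟩ := hD (e.symm v)
    (fun h => hv ⟨e.symm v, h, e.apply_symm_apply v⟩)
  refine ⟨e u, ⟨u, hu, rfl⟩, ?_, ?_⟩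
  · have : H.Adj (e (e.symm v)) (e u) := e.map_rel_iff.2 hadj
    simpa using this
  · have h1 : (H.neighborSet v).ncard = (G.neighborSet (e.symm v)).ncard := by
      conv_lhs => rw [← e.apply_symm_apply v]
      exact ncard_neighborSet_iso e _
    rw [h1, ncard_neighborSet_iso e u]
    exact hle

lemma gammaSt_eq_of_iso {V W : Type*} {G : SimpleGraph V} {H : SimpleGraph W}
    (e : G ≃g H) : gammaSt G = gammaSt H := by
  unfold gammaSt
  congr 1
  ext c
  constructor
  · rintro ⟨D, hfin, hdom, rfl⟩
    exact ⟨e '' D, hfin.image _, hdom.image_iso e,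
      Set.ncard_image_of_injective _ e.injective⟩
  · rintro ⟨D, hfin, hdom, rfl⟩
    exact ⟨e.symm '' D, hfin.image _, hdom.image_iso e.symm,
      Set.ncard_image_of_injective _ e.symm.injective⟩

lemma pathGraph_ncard_le (n : ℕ) (v : Fin n) :
    ((pathGraph n).neighborSet v).ncard ≤ 2 := by
  have h2 : (Set.univ : Set Bool).ncard = 2 := by
    rw [Set.ncard_univ]; simp
  rw [← h2]
  apply Set.ncard_le_ncard_of_injOn (fun u => decide (u.val < v.val))
    (fun _ _ => Set.mem_univ _) ?_ Set.finite_univ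
  intro a ha b hb hab
  rw [SimpleGraph.mem_neighborSet, pathGraph_adj] at ha hb
  have hab' : (a.val < v.val) ↔ (b.val < v.val) := by
    simpa [decide_eq_decide] using hab
  apply Fin.ext
  omega

lemma pathGraph_ncard_internal (n : ℕ) (u : Fin n) (h1 : 1 ≤ u.val) (h2 : u.val + 1 < n) :
    ((pathGraph n).neighborSet u).ncard = 2 := by
  have hset : (pathGraph n).neighborSet u =
      {(⟨u.val - 1, by omega⟩ : Fin n), ⟨u.val + 1, h2⟩} := by
    ext w
    simp only [SimpleGraph.mem_neighborSet, pathGraph_adj, Set.mem_insert_iff,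
      Set.mem_singleton_iff, Fin.ext_iff]
    omega
  rw [hset, Set.ncard_pair]
  simp only [ne_eq, Fin.ext_iff]
  omega

/-- Counting lower bound: a strong dominating set of `pathGraph n` has at least `n/3` vertices. -/
lemma pathGraph_strongDom_lb {n : ℕ} {D : Set (Fin n)}
    (hD : IsStrongDominating (pathGraph n) D) : n ≤ 3 * D.ncard := by
  classical
  set F : Finset (Fin n) := D.toFinset with hF
  have hcover : (Finset.univ : Finset (Fin n)) ⊆
      F.biUnion (fun d => insert d ((pathGraph n).neighborFinset d)) := by
    intro v _
    by_cases hv : v ∈ D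
    · exact Finset.mem_biUnion.2 ⟨v, by simpa [hF], Finset.mem_insert_self _ _⟩
    · obtain ⟨u, hu, hadj, -⟩ := hD v hv
      exact Finset.mem_biUnion.2 ⟨u, by simpa [hF],
        Finset.mem_insert.2 (Or.inr ((SimpleGraph.mem_neighborFinset _ _ _).2 hadj.symm))⟩
  have hcard : ∀ d : Fin n, (insert d ((pathGraph n).neighborFinset d)).card ≤ 3 := by
    intro d
    have h1 : ((pathGraph n).neighborFinset d).card ≤ 2 := by
      have := pathGraph_ncard_le n d
      rwa [Set.ncard_eq_toFinset_card'] at this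
    calc (insert d ((pathGraph n).neighborFinset d)).card
        ≤ ((pathGraph n).neighborFinset d).card + 1 := Finset.card_insert_le _ _
      _ ≤ 3 := by omega
  calc n = (Finset.univ : Finset (Fin n)).card := by simp
    _ ≤ (F.biUnion (fun d => insert d ((pathGraph n).neighborFinset d))).card :=
        Finset.card_le_card hcover
    _ ≤ ∑ d ∈ F, (insert d ((pathGraph n).neighborFinset d)).card :=
        Finset.card_biUnion_le
    _ ≤ ∑ _d ∈ F, 3 := Finset.sum_le_sum (fun d _ => hcard d)
    _ = 3 * D.ncard := by
        rw [Finset.sum_const, smul_eq_mul, hF]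
        rw [Set.ncard_eq_toFinset_card']
        ring

/-! ### Explicit strong dominating sets -/

def D1 (k : ℕ) : Finset (Fin (3 * k + 1)) :=
  Finset.univ.image (fun i : Fin (k + 1) =>
    (⟨if i.val = k then 3 * k else 3 * i.val + 1, by
      have := i.isLt; split <;> omega⟩ : Fin (3 * k + 1)))

lemma D1_card (k : ℕ) : (D1 k).card = k + 1 := by
  rw [D1, Finset.card_image_of_injective _ ?_, Finset.card_univ, Fintype.card_fin]
  intro i j h
  have h' := congrArg Fin.val h
  simp only at h'
  have hi := i.isLt; have hj := j.isLt
  apply Fin.ext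
  split_ifs at h' <;> omega

lemma mem_D1 (k : ℕ) (v : Fin (3 * k + 1)) :
    v ∈ D1 k ↔ v.val % 3 = 1 ∨ v.val = 3 * k := by
  simp only [D1, Finset.mem_image, Finset.mem_univ, true_and]
  constructor
  · rintro ⟨i, rfl⟩
    have := i.isLt
    show (if i.val = k then 3 * k else 3 * i.val + 1) % 3 = 1 ∨
      (if i.val = k then 3 * k else 3 * i.val + 1) = 3 * k
    split <;> omega
  · intro h
    have hlt := v.isLt
    rcases Nat.lt_or_ge v.val (3 * k) with hl | hg
    · refine ⟨⟨v.val / 3, by omega⟩, Fin.ext ?_⟩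
      show (if v.val / 3 = k then 3 * k else 3 * (v.val / 3) + 1) = v.val
      rw [if_neg (by omega)]
      omega
    · refine ⟨⟨k, by omega⟩, Fin.ext ?_⟩
      show (if k = k then 3 * k else 3 * k + 1) = v.val
      rw [if_pos rfl]
      omega

lemma D1_dom (k : ℕ) (hk : 1 ≤ k) :
    IsStrongDominating (pathGraph (3 * k + 1)) ↑(D1 k) := by
  intro v hv
  rw [Finset.mem_coe, mem_D1] at hv
  push_neg at hv
  obtain ⟨hv1, hv2⟩ := hv
  have hlt := v.isLt
  have hm : v.val % 3 = 0 ∨ v.val % 3 = 2 := by omega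
  rcases hm with h0 | h2
  · refine ⟨⟨v.val + 1, by omega⟩, ?_, ?_, ?_⟩
    · rw [Finset.mem_coe, mem_D1]; left; show (v.val + 1) % 3 = 1; omega
    · rw [pathGraph_adj]; left; rfl
    · rw [pathGraph_ncard_internal _ ⟨v.val + 1, by omega⟩
        (by show 1 ≤ v.val + 1; omega) (by show v.val + 1 + 1 < 3 * k + 1; omega)]
      exact pathGraph_ncard_le _ v
  · refine ⟨⟨v.val - 1, by omega⟩, ?_, ?_, ?_⟩
    · rw [Finset.mem_coe, mem_D1]; left; show (v.val - 1) % 3 = 1; omega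
    · rw [pathGraph_adj]; right; show v.val - 1 + 1 = v.val; omega
    · rw [pathGraph_ncard_internal _ ⟨v.val - 1, by omega⟩
        (by show 1 ≤ v.val - 1; omega) (by show v.val - 1 + 1 < 3 * k + 1; omega)]
      exact pathGraph_ncard_le _ v

def D0 (k : ℕ) : Finset (Fin (3 * k)) :=
  Finset.univ.image (fun i : Fin k =>
    (⟨3 * i.val + 1, by have := i.isLt; omega⟩ : Fin (3 * k)))

lemma D0_card (k : ℕ) : (D0 k).card = k := by
  rw [D0, Finset.card_image_of_injective _ ?_, Finset.card_univ, Fintype.card_fin]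
  intro i j h
  have h' := congrArg Fin.val h
  simp only at h'
  apply Fin.ext
  omega

lemma mem_D0 (k : ℕ) (v : Fin (3 * k)) : v ∈ D0 k ↔ v.val % 3 = 1 := by
  simp only [D0, Finset.mem_image, Finset.mem_univ, true_and]
  constructor
  · rintro ⟨i, rfl⟩; show (3 * i.val + 1) % 3 = 1; omega
  · intro h
    have hlt := v.isLt
    exact ⟨⟨v.val / 3, by omega⟩, Fin.ext (by show 3 * (v.val / 3) + 1 = v.val; omega)⟩

lemma D0_dom (k : ℕ) (hk : 1 ≤ k) :
    IsStrongDominating (pathGraph (3 * k)) ↑(D0 k) := by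
  intro v hv
  rw [Finset.mem_coe, mem_D0] at hv
  have hlt := v.isLt
  have hm : v.val % 3 = 0 ∨ v.val % 3 = 2 := by omega
  rcases hm with h0 | h2
  · refine ⟨⟨v.val + 1, by omega⟩, ?_, ?_, ?_⟩
    · rw [Finset.mem_coe, mem_D0]; show (v.val + 1) % 3 = 1; omega
    · rw [pathGraph_adj]; left; rfl
    · rw [pathGraph_ncard_internal _ ⟨v.val + 1, by omega⟩
        (by show 1 ≤ v.val + 1; omega) (by show v.val + 1 + 1 < 3 * k; omega)]
      exact pathGraph_ncard_le _ v
  · refine ⟨⟨v.val - 1, by omega⟩, ?_, ?_, ?_⟩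
    · rw [Finset.mem_coe, mem_D0]; show (v.val - 1) % 3 = 1; omega
    · rw [pathGraph_adj]; right; show v.val - 1 + 1 = v.val; omega
    · rw [pathGraph_ncard_internal _ ⟨v.val - 1, by omega⟩
        (by show 1 ≤ v.val - 1; omega) (by show v.val - 1 + 1 < 3 * k; omega)]
      exact pathGraph_ncard_le _ v

lemma gammaSt_path_3k1 (k : ℕ) (hk : 1 ≤ k) : gammaSt (pathGraph (3 * k + 1)) = k + 1 := by
  have hmem : (k + 1) ∈ {c | ∃ D : Set (Fin (3 * k + 1)), D.Finite ∧
      IsStrongDominating (pathGraph (3 * k + 1)) D ∧ D.ncard = c} :=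
    ⟨↑(D1 k), (D1 k).finite_toSet, D1_dom k hk, by rw [Set.ncard_coe_finset, D1_card]⟩
  unfold gammaSt
  apply le_antisymm (Nat.sInf_le hmem)
  apply le_csInf ⟨_, hmem⟩
  rintro c ⟨D, hfin, hdom, rfl⟩
  have := pathGraph_strongDom_lb hdom
  omega

lemma gammaSt_path_3k (k : ℕ) (hk : 1 ≤ k) : gammaSt (pathGraph (3 * k)) = k := by
  have hmem : k ∈ {c | ∃ D : Set (Fin (3 * k)), D.Finite ∧
      IsStrongDominating (pathGraph (3 * k)) D ∧ D.ncard = c} :=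
    ⟨↑(D0 k), (D0 k).finite_toSet, D0_dom k hk, by rw [Set.ncard_coe_finset, D0_card]⟩
  unfold gammaSt
  apply le_antisymm (Nat.sInf_le hmem)
  apply le_csInf ⟨_, hmem⟩
  rintro c ⟨D, hfin, hdom, rfl⟩
  have := pathGraph_strongDom_lb hdom
  omega

/-- Removing the last vertex of `P_{3k+1}` gives `P_{3k}`. -/
def removeLastIso (k : ℕ) :
    ((pathGraph (3 * k + 1)).induce
      ({(⟨3 * k, by omega⟩ : Fin (3 * k + 1))} : Set (Fin (3 * k + 1)))ᶜ) ≃g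
      pathGraph (3 * k) where
  toFun x := ⟨x.1.val, by
    have hx : x.1 ≠ (⟨3 * k, by omega⟩ : Fin (3 * k + 1)) := x.2
    have hlt := x.1.isLt
    have : x.1.val ≠ 3 * k := fun h => hx (Fin.ext h)
    omega⟩
  invFun y := ⟨⟨y.val, by have := y.isLt; omega⟩, by
    have := y.isLt
    simp only [Set.mem_compl_iff, Set.mem_singleton_iff, Fin.ext_iff]
    omega⟩
  left_inv x := by apply Subtype.ext; apply Fin.ext; rfl
  right_inv y := by apply Fin.ext; rfl
  map_rel_iff' := by
    intro a b
    simp only [Equiv.coe_fn_mk, pathGraph_adj, comap_adj, Function.Embedding.coe_subtype]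

theorem stGammaSt_pathGraph_one (n : ℕ) (hn : 4 ≤ n) (hmod : n % 3 = 1) :
    stGammaSt (pathGraph n) = 1 := by
  obtain ⟨k, rfl⟩ : ∃ k, n = 3 * k + 1 := ⟨n / 3, by omega⟩
  have hk : 1 ≤ k := by omega
  set T := {m | ∃ S : Set (Fin (3 * k + 1)), S.Finite ∧ S.ncard = m ∧
      gammaSt ((pathGraph (3 * k + 1)).induce Sᶜ) ≠ gammaSt (pathGraph (3 * k + 1))} with hT
  have h1 : 1 ∈ T := by
    refine ⟨{(⟨3 * k, by omega⟩ : Fin (3 * k + 1))}, Set.finite_singleton _,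
      Set.ncard_singleton _, ?_⟩
    rw [gammaSt_eq_of_iso (removeLastIso k), gammaSt_path_3k k hk, gammaSt_path_3k1 k hk]
    omega
  have h0 : 0 ∉ T := by
    rintro ⟨S, hfin, hc0, hne⟩
    have hS : S = ∅ := (Set.ncard_eq_zero hfin).1 hc0
    subst hS
    rw [Set.compl_empty] at hne
    exact hne (gammaSt_eq_of_iso (induceUnivIso _))
  have : stGammaSt (pathGraph (3 * k + 1)) = sInf T := rfl
  rw [this]
  apply le_antisymm (Nat.sInf_le h1)
  rcases Nat.eq_zero_or_pos (sInf T) with h | h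
  · exact absurd (h ▸ Nat.sInf_mem ⟨1, h1⟩) h0
  · exact h
end

section
/- For every integer n ≥ 5, removing the hub vertex from the wheel W_n = K_1 ∨ C_{n−1} changes the strong domination number: γ_st(W_n) = 1 but γ_st(W_n − hub) = ⌈(n−1)/3⌉ ≥ 2; hence the stability of γ_st for W_n equals 1. -/
open SimpleGraph

section Helpers

variable {V : Type*} {W : Type*} {G : SimpleGraph V} {H : SimpleGraph W}

lemma iso_neighborSet (e : G ≃g H) (v : V) :
    H.neighborSet (e v) = e '' G.neighborSet v := by
  ext x
  simp only [mem_neighborSet, Set.mem_image]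
  constructor
  · intro h
    refine ⟨e.symm x, ?_, e.apply_symm_apply x⟩
    have : H.Adj (e v) (e (e.symm x)) := by rwa [e.apply_symm_apply]
    exact e.map_adj_iff.mp this
  · rintro ⟨y, hy, rfl⟩
    exact e.map_adj_iff.mpr hy

lemma iso_ncard_neighborSet (e : G ≃g H) (v : V) :
    (H.neighborSet (e v)).ncard = (G.neighborSet v).ncard := by
  rw [iso_neighborSet e v, Set.ncard_image_of_injective _ e.injective]

lemma isStrongDominating_image (e : G ≃g H) {D : Set V} (hD : IsStrongDominating G D) :
    IsStrongDominating H (e '' D) := by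
  intro w hw
  have hv : e.symm w ∉ D := fun h => hw ⟨e.symm w, h, e.apply_symm_apply w⟩
  obtain ⟨u, hu, hadj, hdeg⟩ := hD (e.symm w) hv
  refine ⟨e u, ⟨u, hu, rfl⟩, ?_, ?_⟩
  · have : H.Adj (e (e.symm w)) (e u) := e.map_adj_iff.mpr hadj
    rwa [e.apply_symm_apply] at this
  · have h1 : (H.neighborSet w).ncard = (G.neighborSet (e.symm w)).ncard := by
      conv_lhs => rw [← e.apply_symm_apply w]
      exact iso_ncard_neighborSet e _
    rw [h1, iso_ncard_neighborSet e u]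
    exact hdeg

lemma gammaSt_set_subset (e : G ≃g H) :
    {n | ∃ D : Set V, D.Finite ∧ IsStrongDominating G D ∧ D.ncard = n} ⊆
      {n | ∃ D : Set W, D.Finite ∧ IsStrongDominating H D ∧ D.ncard = n} := by
  rintro n ⟨D, hf, hsd, hc⟩
  exact ⟨e '' D, hf.image _, isStrongDominating_image e hsd,
    by rw [Set.ncard_image_of_injective _ e.injective, hc]⟩

lemma gammaSt_iso (e : G ≃g H) : gammaSt G = gammaSt H := by
  unfold gammaSt
  congr 1
  exact Set.Subset.antisymm (gammaSt_set_subset e) (gammaSt_set_subset e.symm)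

lemma sInf_eq_one' {s : Set ℕ} (h1 : 1 ∈ s) (h0 : 0 ∉ s) : sInf s = 1 := by
  refine le_antisymm (Nat.sInf_le h1) ?_
  rcases Nat.eq_zero_or_pos (sInf s) with h | h
  · exact absurd (h ▸ Nat.sInf_mem ⟨1, h1⟩) h0
  · exact h

end Helpers

section Cycle

lemma cycle_nbhd_ncard (m : ℕ) (v : Fin (m + 3)) :
    ((cycleGraph (m + 3)).neighborSet v).ncard = 2 := by
  rw [show cycleGraph (m + 3) = cycleGraph ((m + 1) + 2) from rfl,
    cycleGraph_neighborSet]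
  apply Set.ncard_pair
  intro h
  have h2 : v = v + (1 + 1) := by
    rw [← add_assoc]; exact sub_eq_iff_eq_add.mp h
  have h3 : (1 + 1 : Fin (m + 3)) = 0 := (left_eq_add.mp h2)
  have h4 := congrArg Fin.val h3
  rw [Fin.val_add, Fin.val_one, Fin.val_zero] at h4
  rw [Nat.mod_eq_of_lt (by omega)] at h4
  omega

lemma gammaSt_cycleGraph (m : ℕ) : gammaSt (cycleGraph (m + 3)) = (m + 3 + 2) / 3 := by
  have hdeg := cycle_nbhd_ncard m
  have hmem : (m + 3 + 2) / 3 ∈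
      {n | ∃ D : Set (Fin (m + 3)), D.Finite ∧ IsStrongDominating (cycleGraph (m + 3)) D ∧
        D.ncard = n} := by
    set f : Fin ((m + 3 + 2) / 3) → Fin (m + 3) := fun i => ⟨3 * i.val, by omega⟩ with hf
    have hinj : Function.Injective f := by
      intro a b hab
      have := congrArg Fin.val hab
      simp only [hf] at this
      exact Fin.ext (by omega)
    refine ⟨Set.range f, Set.toFinite _, ?_, ?_⟩
    · intro v hv
      have hv3 : ¬ 3 ∣ v.val := by
        intro ⟨c, hc⟩
        exact hv ⟨⟨c, by omega⟩, Fin.ext (by simp [hf]; omega)⟩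
      have hcase : v.val % 3 = 1 ∨ v.val % 3 = 2 := by omega
      rcases hcase with h1 | h2
      · refine ⟨v - 1, ?_, ?_, by rw [hdeg, hdeg]⟩
        · have hne : v ≠ 0 := by
            intro h; rw [h] at h1; simp at h1
          have hval : ((v - 1 : Fin (m + 3)) : ℕ) = v.val - 1 := by
            have := Fin.coe_sub_one (n := m + 2) v
            rw [this, if_neg hne]
          refine ⟨⟨(v.val - 1) / 3, by omega⟩, Fin.ext ?_⟩
          simp only [hf]
          rw [hval]; omega
        · rw [show cycleGraph (m + 3) = cycleGraph ((m + 1) + 2) from rfl, cycleGraph_adj]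
          left
          rw [sub_sub_cancel]
      · refine ⟨v + 1, ?_, ?_, by rw [hdeg, hdeg]⟩
        · have hval : ((v + 1 : Fin (m + 3)) : ℕ) = if v = Fin.last (m + 2) then 0
              else v.val + 1 := Fin.val_add_one v
          by_cases hl : v = Fin.last (m + 2)
          · rw [if_pos hl] at hval
            exact ⟨⟨0, by omega⟩, Fin.ext (by simp [hf, hval])⟩
          · rw [if_neg hl] at hval
            refine ⟨⟨(v.val + 1) / 3, ?_⟩, Fin.ext ?_⟩
            · have : v.val < m + 2 := by
                rcases Fin.lt_or_eq_of_le (Fin.le_last v) with h | h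
                · exact h
                · exact absurd h hl
              omega
            · simp only [hf]; rw [hval]; omega
        · rw [show cycleGraph (m + 3) = cycleGraph ((m + 1) + 2) from rfl, cycleGraph_adj]
          right
          rw [add_sub_cancel_left]
    · rw [← Set.image_univ, Set.ncard_image_of_injective _ hinj, Set.ncard_univ,
        Nat.card_eq_fintype_card, Fintype.card_fin]
  refine le_antisymm (Nat.sInf_le hmem) (le_csInf ⟨_, hmem⟩ ?_)
  rintro k ⟨D, hfin, hsd, rfl⟩
  have hcover : Finset.univ ⊆ hfin.toFinset.biUnion
      (fun u => insert u ((cycleGraph (m + 3)).neighborFinset u)) := by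
    intro v _
    by_cases hv : v ∈ D
    · exact Finset.mem_biUnion.mpr ⟨v, hfin.mem_toFinset.mpr hv, Finset.mem_insert_self _ _⟩
    · obtain ⟨u, hu, hadj, -⟩ := hsd v hv
      exact Finset.mem_biUnion.mpr ⟨u, hfin.mem_toFinset.mpr hu,
        Finset.mem_insert_of_mem ((mem_neighborFinset _ _ _).mpr hadj.symm)⟩
  have hnb : ∀ u : Fin (m + 3), ((cycleGraph (m + 3)).neighborFinset u).card = 2 := by
    intro u
    rw [neighborFinset_def, ← Set.ncard_eq_toFinset_card', hdeg]
  have hcard : m + 3 ≤ 3 * D.ncard := by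
    calc m + 3 = (Finset.univ : Finset (Fin (m + 3))).card := by
          rw [Finset.card_univ, Fintype.card_fin]
      _ ≤ (hfin.toFinset.biUnion
            (fun u => insert u ((cycleGraph (m + 3)).neighborFinset u))).card :=
          Finset.card_le_card hcover
      _ ≤ ∑ u ∈ hfin.toFinset, (insert u ((cycleGraph (m + 3)).neighborFinset u)).card :=
          Finset.card_biUnion_le
      _ ≤ ∑ u ∈ hfin.toFinset, 3 := by
          refine Finset.sum_le_sum fun u _ => ?_
          calc (insert u ((cycleGraph (m + 3)).neighborFinset u)).card
              ≤ ((cycleGraph (m + 3)).neighborFinset u).card + 1 := Finset.card_insert_le _ _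
            _ = 3 := by rw [hnb]
      _ = 3 * D.ncard := by
          rw [Finset.sum_const, smul_eq_mul, Set.ncard_eq_toFinset_card _ hfin, mul_comm]
  omega

end Cycle
section Wheel

lemma joinG_adj_rr {m : ℕ} {a b : Fin (m + 4)} :
    (joinG (⊥ : SimpleGraph Unit) (cycleGraph (m + 4))).Adj (Sum.inr a) (Sum.inr b) ↔
      (cycleGraph (m + 4)).Adj a b := by
  simp only [joinG, fromRel_adj]
  constructor
  · rintro ⟨hne, h | h⟩
    · exact h
    · exact h.symm
  · intro h
    exact ⟨by simp [h.ne], Or.inl h⟩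

lemma joinG_adj_rl {m : ℕ} {a : Fin (m + 4)} :
    (joinG (⊥ : SimpleGraph Unit) (cycleGraph (m + 4))).Adj (Sum.inr a) (Sum.inl ()) := by
  simp only [joinG, fromRel_adj]
  exact ⟨by simp, Or.inl trivial⟩

lemma hub_nbhd (m : ℕ) :
    (joinG (⊥ : SimpleGraph Unit) (cycleGraph (m + 4))).neighborSet (Sum.inl ()) =
      Set.range Sum.inr := by
  ext x
  cases x with
  | inl u =>
      cases u
      simp only [mem_neighborSet, joinG, fromRel_adj]
      simp
  | inr b =>
      simp only [mem_neighborSet]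
      constructor
      · intro _; exact ⟨b, rfl⟩
      · intro _; exact (joinG_adj_rl (a := b)).symm

lemma hub_nbhd_ncard (m : ℕ) :
    ((joinG (⊥ : SimpleGraph Unit) (cycleGraph (m + 4))).neighborSet (Sum.inl ())).ncard
      = m + 4 := by
  rw [hub_nbhd, ← Set.image_univ, Set.ncard_image_of_injective _ Sum.inr_injective,
    Set.ncard_univ, Nat.card_eq_fintype_card, Fintype.card_fin]

lemma nbhd_le_wheel (m : ℕ) (v : Unit ⊕ Fin (m + 4)) :
    ((joinG (⊥ : SimpleGraph Unit) (cycleGraph (m + 4))).neighborSet v).ncard ≤ m + 4 := by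
  have hsub : (joinG (⊥ : SimpleGraph Unit) (cycleGraph (m + 4))).neighborSet v ⊆ {v}ᶜ :=
    fun x hx => by
      rw [SimpleGraph.mem_neighborSet] at hx
      simp only [Set.mem_compl_iff, Set.mem_singleton_iff]
      exact hx.ne'
  have h2 : ({v}ᶜ : Set (Unit ⊕ Fin (m + 4))).ncard = m + 4 := by
    rw [Set.compl_eq_univ_diff, Set.ncard_diff_singleton_of_mem (Set.mem_univ v),
      Set.ncard_univ, Nat.card_eq_fintype_card]
    simp
  calc ((joinG (⊥ : SimpleGraph Unit) (cycleGraph (m + 4))).neighborSet v).ncard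
      ≤ ({v}ᶜ : Set (Unit ⊕ Fin (m + 4))).ncard := Set.ncard_le_ncard hsub (Set.toFinite _)
    _ = m + 4 := h2

lemma gammaSt_wheel (m : ℕ) :
    gammaSt (joinG (⊥ : SimpleGraph Unit) (cycleGraph (m + 4))) = 1 := by
  apply sInf_eq_one'
  · refine ⟨{Sum.inl ()}, Set.finite_singleton _, ?_, Set.ncard_singleton _⟩
    intro v hv
    refine ⟨Sum.inl (), Set.mem_singleton _, ?_, ?_⟩
    · cases v with
      | inl u => cases u; exact absurd (Set.mem_singleton _) hv
      | inr a => exact joinG_adj_rl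
    · rw [hub_nbhd_ncard]
      exact nbhd_le_wheel m v
  · rintro ⟨D, hf, hsd, hc⟩
    rw [(Set.ncard_eq_zero hf).mp hc] at hsd
    obtain ⟨u, hu, -, -⟩ := hsd (Sum.inl ()) (Set.notMem_empty _)
    exact hu

def rimIso (m : ℕ) :
    cycleGraph (m + 4) ≃g
      ((joinG (⊥ : SimpleGraph Unit) (cycleGraph (m + 4))).induce {Sum.inl ()}ᶜ) where
  toEquiv :=
    { toFun := fun j => ⟨Sum.inr j, by simp⟩
      invFun := fun x => Sum.elim (fun _ => (0 : Fin (m + 4))) id x.1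
      left_inv := fun j => rfl
      right_inv := fun x => by
        obtain ⟨x, hx⟩ := x
        cases x with
        | inl u => cases u; simp at hx
        | inr j => rfl }
  map_rel_iff' := by
    intro a b
    exact joinG_adj_rr

end Wheel

theorem stGammaSt_wheel_one (n : ℕ) (hn : 5 ≤ n) :
    gammaSt (joinG (⊥ : SimpleGraph Unit) (cycleGraph (n - 1))) = 1 ∧
    gammaSt ((joinG (⊥ : SimpleGraph Unit) (cycleGraph (n - 1))).induce {Sum.inl ()}ᶜ)
      = (n - 1 + 2) / 3 ∧
    2 ≤ (n - 1 + 2) / 3 ∧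
    stGammaSt (joinG (⊥ : SimpleGraph Unit) (cycleGraph (n - 1))) = 1 := by
  obtain ⟨m, rfl⟩ : ∃ m, n = m + 5 := ⟨n - 5, by omega⟩
  rw [show m + 5 - 1 = m + 4 from rfl]
  have h2 : gammaSt ((joinG (⊥ : SimpleGraph Unit) (cycleGraph (m + 4))).induce
      {Sum.inl ()}ᶜ) = (m + 4 + 2) / 3 := by
    rw [← gammaSt_iso (rimIso m)]
    exact gammaSt_cycleGraph (m + 1)
  refine ⟨gammaSt_wheel m, h2, by omega, ?_⟩
  apply sInf_eq_one'
  · refine ⟨{Sum.inl ()}, Set.finite_singleton _, Set.ncard_singleton _, ?_⟩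
    rw [h2, gammaSt_wheel m]
    omega
  · rintro ⟨S, hf, hc, hne⟩
    rw [(Set.ncard_eq_zero hf).mp hc, Set.compl_empty] at hne
    exact hne (gammaSt_iso (induceUnivIso _))
end
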